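/- For every left A-module N: (i) the formula (a·φ)(x) = a₍₀₎·φ(S(a₍₁₎) x a₍₋₁₎) defines a left A-module structure on Hom_k(H, N) (i.e. (ab)·φ = a·(b·φ) and 1·φ = φ); (ii) the map u : N → Hom_k(H, N), u(n)(h) = ε(h)n, is A-linear for this structure. -/

import Mathlib

/-!
# Statement 5

`k` a field, `H` a Hopf algebra over `k` with antipode `S`, `A` an `H`-bicomodule algebra with
right coaction `ρ(a) = a₍₀₎ ⊗ a₍₁₎` and left coaction `λ(a) = a₍₋₁₎ ⊗ a₍₀₎` (commuting).  For a
left `A`-module `N`: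
(i) `(a · φ)(x) = a₍₀₎ • φ (S(a₍₁₎) * x * a₍₋₁₎)` defines a left `A`-module structure on
`Hom_k(H, N)`, i.e. `(a b) · φ = a · (b · φ)` and `1 · φ = φ`;
(ii) `u : N → Hom_k(H, N)`, `u(n)(h) = ε(h) • n`, is `A`-linear for this structure.
-/

open TensorProduct

set_option maxHeartbeats 1000000
set_option synthInstance.maxHeartbeats 400000
set_option linter.unusedVariables false

noncomputable section

variable (k : Type) [Field k]

/-- The curried action of a `k`-algebra `R` on a module `V`, as a `k`-bilinear map. -/
def csmul (R : Type) [Ring R] [Algebra k R] (V : Type) [AddCommGroup V] [Module k V]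
    [Module R V] [IsScalarTower k R V] [SMulCommClass k R V] : R →ₗ[k] V →ₗ[k] V where
  toFun r :=
    { toFun := fun v => r • v
      map_add' := smul_add r
      map_smul' := fun c v => (smul_comm c r v).symm }
  map_add' r r' := LinearMap.ext fun v => add_smul r r' v
  map_smul' c r := LinearMap.ext fun v => smul_assoc c r v

variable (H : Type) [Ring H] [HopfAlgebra k H]

/-- `H ⊗ H →ₗ End_k(H)`, `u ⊗ v ↦ (x ↦ u * x * v)`. -/
def sandwich : H ⊗[k] H →ₗ[k] (H →ₗ[k] H) :=
  (TensorProduct.lift (LinearMap.llcomp k H H H)) ∘ₗ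
    (TensorProduct.map (LinearMap.mul k H) (LinearMap.mul k H).flip)

/-- `H ⊗ H →ₗ End_k(Hom_k(H, W))`, `u ⊗ v ↦ (φ ↦ (x ↦ φ (u * x * v)))`. -/
def sandwichHom (W : Type) [AddCommGroup W] [Module k W] :
    H ⊗[k] H →ₗ[k] (H →ₗ[k] W) →ₗ[k] (H →ₗ[k] W) :=
  (LinearMap.llcomp k H H W).flip ∘ₗ sandwich k H

variable (A : Type) [Ring A] [Algebra k A]
variable (ρ : A →ₐ[k] A ⊗[k] H) (lco : A →ₐ[k] H ⊗[k] A)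

/-- `A →ₗ A ⊗ (H ⊗ H)`, `a ↦ a₍₀₎ ⊗ (S(a₍₁₎) ⊗ a₍₋₁₎)`. -/
def deltaS : A →ₗ[k] A ⊗[k] (H ⊗[k] H) :=
  (LinearMap.lTensor A (LinearMap.rTensor H (HopfAlgebra.antipode (R := k)))) ∘ₗ
    (LinearMap.lTensor A (TensorProduct.comm k H H).toLinearMap) ∘ₗ
    (TensorProduct.assoc k A H H).toLinearMap ∘ₗ
    (LinearMap.rTensor H (TensorProduct.comm k H A).toLinearMap) ∘ₗ
    (LinearMap.rTensor H lco.toLinearMap) ∘ₗ ρ.toLinearMap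

/-- Given a curried action `ν : A →ₗ End_k(W)`, the induced action of `A` on `Hom_k(H, W)`:
`(a · φ)(x) = ν(a₍₀₎) (φ (S(a₍₁₎) * x * a₍₋₁₎))`. -/
def liftAct (W : Type) [AddCommGroup W] [Module k W] (ν : A →ₗ[k] W →ₗ[k] W) :
    A →ₗ[k] (H →ₗ[k] W) →ₗ[k] (H →ₗ[k] W) :=
  (TensorProduct.lift
      (((LinearMap.llcomp k (H →ₗ[k] W) (H →ₗ[k] W) (H →ₗ[k] W)).comp
          ((LinearMap.llcomp k H W W) ∘ₗ ν)).compl₂ (sandwichHom k H W))) ∘ₗ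
    deltaS k H A ρ lco

variable (N : Type) [AddCommGroup N] [Module k N] [Module A N]
  [IsScalarTower k A N] [SMulCommClass k A N]




end

section HopfAux
noncomputable section
variable {k : Type} [Field k] {H : Type} [Ring H] [HopfAlgebra k H]
variable {C : Type} [AddCommGroup C] [Module k C] [Coalgebra k C]
open Coalgebra HopfAlgebra LinearMap

/-- convolution product -/
def convP (f g : C →ₗ[k] H) : C →ₗ[k] H :=
  LinearMap.mul' k H ∘ₗ TensorProduct.map f g ∘ₗ Coalgebra.comul

lemma convP_apply (f g : C →ₗ[k] H) (c : C) :
    convP f g c = LinearMap.mul' k H (TensorProduct.map f g (Coalgebra.comul c)) := rfl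

def convUnit : C →ₗ[k] H := Algebra.linearMap k H ∘ₗ Coalgebra.counit

lemma convP_assoc (f g h : C →ₗ[k] H) : convP (convP f g) h = convP f (convP g h) := by
  have e1 : TensorProduct.map (convP f g) h =
      TensorProduct.map (LinearMap.mul' k H ∘ₗ TensorProduct.map f g) h ∘ₗ
        (Coalgebra.comul (R := k) (A := C)).rTensor C := by
    ext x y; simp [convP]
  have e2 : TensorProduct.map f (convP g h) =
      TensorProduct.map f (LinearMap.mul' k H ∘ₗ TensorProduct.map g h) ∘ₗ
        (Coalgebra.comul (R := k) (A := C)).lTensor C := by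
    ext x y; simp [convP]
  have key : ∀ t : C ⊗[k] (C ⊗[k] C),
      LinearMap.mul' k H (TensorProduct.map (LinearMap.mul' k H ∘ₗ TensorProduct.map f g) h
        ((TensorProduct.assoc k C C C).symm t)) =
      LinearMap.mul' k H (TensorProduct.map f (LinearMap.mul' k H ∘ₗ TensorProduct.map g h) t) := by
    intro t
    induction t using TensorProduct.induction_on with
    | zero => simp
    | tmul x t =>
      induction t using TensorProduct.induction_on with
      | zero => simp [TensorProduct.tmul_zero]
      | tmul y z => simp [mul_assoc]
      | add u v hu hv => simp only [TensorProduct.tmul_add, map_add, hu, hv]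
    | add u v hu hv => simp only [map_add, hu, hv]
  ext c
  have hl : convP (convP f g) h c = LinearMap.mul' k H
      (TensorProduct.map (LinearMap.mul' k H ∘ₗ TensorProduct.map f g) h
        ((Coalgebra.comul (R := k)).rTensor C (Coalgebra.comul c))) := by
    rw [convP_apply, e1]; rfl
  have hr : convP f (convP g h) c = LinearMap.mul' k H
      (TensorProduct.map f (LinearMap.mul' k H ∘ₗ TensorProduct.map g h)
        ((Coalgebra.comul (R := k)).lTensor C (Coalgebra.comul c))) := by
    rw [convP_apply, e2]; rfl
  rw [hl, hr, ← Coalgebra.coassoc_symm_apply, key]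

lemma convP_unit_right (f : C →ₗ[k] H) : convP f convUnit = f := by
  have e : TensorProduct.map f (convUnit (k := k) (C := C) (H := H)) =
      TensorProduct.map f (Algebra.linearMap k H) ∘ₗ
        (Coalgebra.counit (R := k) (A := C)).lTensor C := by
    ext x y; simp [convUnit]
  ext c
  rw [convP_apply, e, LinearMap.comp_apply, Coalgebra.lTensor_counit_comul]
  simp

lemma convP_unit_left (f : C →ₗ[k] H) : convP convUnit f = f := by
  have e : TensorProduct.map (convUnit (k := k) (C := C) (H := H)) f =
      TensorProduct.map (Algebra.linearMap k H) f ∘ₗ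
        (Coalgebra.counit (R := k) (A := C)).rTensor C := by
    ext x y; simp [convUnit]
  ext c
  rw [convP_apply, e, LinearMap.comp_apply, Coalgebra.rTensor_counit_comul]
  simp

lemma antipode_one' : antipode (R := k) (1 : H) = 1 := by
  have := mul_antipode_rTensor_comul_apply (R := k) (1 : H)
  rw [Bialgebra.comul_one, Algebra.TensorProduct.one_def] at this
  simpa using this

lemma counit_antipode' (a : H) :
    Coalgebra.counit (R := k) (antipode (R := k) a) = Coalgebra.counit (R := k) a := by
  set rep := Coalgebra.Repr.arbitrary k a with hrep
  have ha : ∑ i ∈ rep.index, Coalgebra.counit (R := k) (rep.right i) • rep.left i = a := by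
    have h1 := Coalgebra.sum_tmul_counit_eq (R := k) rep
    have h2 := congr(TensorProduct.rid k H $h1)
    rw [map_sum] at h2
    simp only [TensorProduct.rid_tmul] at h2
    simpa using h2
  have h2 : Coalgebra.counit (R := k)
      (∑ i ∈ rep.index, antipode (R := k) (rep.left i) * rep.right i) =
      Coalgebra.counit (R := k) a := by
    rw [sum_antipode_mul_eq_algebraMap_counit]
    simp
  calc Coalgebra.counit (R := k) (antipode (R := k) a)
      = Coalgebra.counit (R := k) (antipode (R := k)
          (∑ i ∈ rep.index, Coalgebra.counit (R := k) (rep.right i) • rep.left i)) := by rw [ha]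
    _ = ∑ i ∈ rep.index, Coalgebra.counit (R := k) (antipode (R := k) (rep.left i)) *
          Coalgebra.counit (R := k) (rep.right i) := by
        rw [map_sum, map_sum]
        refine Finset.sum_congr rfl fun i _ => ?_
        rw [map_smul, map_smul, smul_eq_mul, mul_comm]
    _ = Coalgebra.counit (R := k)
          (∑ i ∈ rep.index, antipode (R := k) (rep.left i) * rep.right i) := by
        rw [map_sum]
        exact (Finset.sum_congr rfl fun i _ => (Bialgebra.counit_mul _ _).symm)
    _ = Coalgebra.counit (R := k) a := h2

lemma comul_tmul' (a b : H) :
    Coalgebra.comul (R := k) (a ⊗ₜ[k] b) =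
      TensorProduct.tensorTensorTensorComm k H H H H
        (Coalgebra.comul (R := k) a ⊗ₜ Coalgebra.comul (R := k) b) := by
  rfl

lemma counit_tmul' (a b : H) :
    Coalgebra.counit (R := k) (a ⊗ₜ[k] b) =
      Coalgebra.counit (R := k) a * Coalgebra.counit (R := k) b := by
  show Coalgebra.counit (R := k) b • Coalgebra.counit (R := k) a = _
  rw [smul_eq_mul, mul_comm]

lemma mapMM_comul (a b : H) :
    TensorProduct.map (LinearMap.mul' k H) (LinearMap.mul' k H)
      (Coalgebra.comul (R := k) (a ⊗ₜ[k] b)) = Coalgebra.comul (R := k) (a * b) := by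
  rw [comul_tmul', Bialgebra.comul_mul, ← (ℛ k a).eq, ← (ℛ k b).eq, Finset.sum_mul_sum]
  simp [TensorProduct.sum_tmul, TensorProduct.tmul_sum, map_sum,
    Algebra.TensorProduct.tmul_mul_tmul, TensorProduct.tensorTensorTensorComm_tmul]
  exact Finset.sum_comm

def Fm : H ⊗[k] H →ₗ[k] H := antipode (R := k) ∘ₗ LinearMap.mul' k H

def Gm : H ⊗[k] H →ₗ[k] H :=
  LinearMap.mul' k H ∘ₗ TensorProduct.map (antipode (R := k)) (antipode (R := k)) ∘ₗ
    (TensorProduct.comm k H H).toLinearMap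

lemma convFM : convP (Fm (k := k) (H := H)) (LinearMap.mul' k H) = convUnit := by
  have e : TensorProduct.map (Fm (k := k) (H := H)) (LinearMap.mul' k H) =
      (antipode (R := k)).rTensor H ∘ₗ
        TensorProduct.map (LinearMap.mul' k H) (LinearMap.mul' k H) := by
    ext s t; simp [Fm]
  apply TensorProduct.ext'
  intro a b
  rw [convP_apply, e, LinearMap.comp_apply, mapMM_comul, mul_antipode_rTensor_comul_apply]
  simp [convUnit, counit_tmul']
  exact Algebra.commutes _ _

lemma convMG : convP (LinearMap.mul' k H) (Gm (k := k) (H := H)) = convUnit := by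
  apply TensorProduct.ext'
  intro a b
  rw [convP_apply, comul_tmul', ← (ℛ k a).eq, ← (ℛ k b).eq]
  rw [TensorProduct.sum_tmul]
  simp only [TensorProduct.tmul_sum, map_sum, TensorProduct.tensorTensorTensorComm_tmul,
    TensorProduct.map_tmul, LinearMap.mul'_apply, Gm, LinearMap.comp_apply,
    TensorProduct.comm_tmul, LinearEquiv.coe_coe]
  have hterm : ∀ i ∈ (ℛ k a).index,
      (∑ j ∈ (ℛ k b).index, ((ℛ k a).left i * (ℛ k b).left j) *
        (antipode (R := k) ((ℛ k b).right j) * antipode (R := k) ((ℛ k a).right i)))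
      = algebraMap k H (Coalgebra.counit (R := k) b) *
          ((ℛ k a).left i * antipode (R := k) ((ℛ k a).right i)) := by
    intro i _
    have h5 : ∀ j ∈ (ℛ k b).index, ((ℛ k a).left i * (ℛ k b).left j) *
        (antipode (R := k) ((ℛ k b).right j) * antipode (R := k) ((ℛ k a).right i)) =
        (ℛ k a).left i * ((ℛ k b).left j * antipode (R := k) ((ℛ k b).right j)) *
          antipode (R := k) ((ℛ k a).right i) := by
      intro j _; noncomm_ring
    rw [Finset.sum_congr rfl h5]
    have h6 : (∑ j ∈ (ℛ k b).index, (ℛ k a).left i *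
        ((ℛ k b).left j * antipode (R := k) ((ℛ k b).right j)) *
          antipode (R := k) ((ℛ k a).right i)) =
        (ℛ k a).left i * (∑ j ∈ (ℛ k b).index,
          (ℛ k b).left j * antipode (R := k) ((ℛ k b).right j)) *
          antipode (R := k) ((ℛ k a).right i) := by
      rw [Finset.mul_sum, Finset.sum_mul]
    rw [h6, HopfAlgebra.sum_mul_antipode_eq_algebraMap_counit, ← Algebra.commutes, mul_assoc]
  rw [Finset.sum_congr rfl hterm, ← Finset.mul_sum, HopfAlgebra.sum_mul_antipode_eq_algebraMap_counit]
  rw [← map_mul, mul_comm]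
  simp [convUnit, counit_tmul']
  exact Algebra.commutes _ _

lemma antipode_mul' (a b : H) :
    antipode (R := k) (a * b) = antipode (R := k) b * antipode (R := k) a := by
  have hfg : Fm (k := k) (H := H) = Gm := by
    calc Fm (k := k) (H := H) = convP Fm convUnit := (convP_unit_right _).symm
      _ = convP Fm (convP (LinearMap.mul' k H) Gm) := by rw [convMG]
      _ = convP (convP Fm (LinearMap.mul' k H)) Gm := (convP_assoc _ _ _).symm
      _ = convP convUnit Gm := by rw [convFM]
      _ = Gm := convP_unit_left _
  have := congr($hfg (a ⊗ₜ[k] b))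
  simpa [Fm, Gm] using this

end
end HopfAux

noncomputable section

variable (k : Type) [Field k]
variable (H : Type) [Ring H] [HopfAlgebra k H]
variable (A : Type) [Ring A] [Algebra k A]
variable (ρ : A →ₐ[k] A ⊗[k] H) (lco : A →ₐ[k] H ⊗[k] A)
variable (N : Type) [AddCommGroup N] [Module k N] [Module A N]
  [IsScalarTower k A N] [SMulCommClass k A N]

def Emap (W : Type) [AddCommGroup W] [Module k W] (ν : A →ₗ[k] W →ₗ[k] W) :
    A ⊗[k] (H ⊗[k] H) →ₗ[k] (H →ₗ[k] W) →ₗ[k] (H →ₗ[k] W) :=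
  TensorProduct.lift
      (((LinearMap.llcomp k (H →ₗ[k] W) (H →ₗ[k] W) (H →ₗ[k] W)).comp
          ((LinearMap.llcomp k H W W) ∘ₗ ν)).compl₂ (sandwichHom k H W))

lemma liftAct_eq (W : Type) [AddCommGroup W] [Module k W] (ν : A →ₗ[k] W →ₗ[k] W) :
    liftAct k H A ρ lco W ν = Emap k H A W ν ∘ₗ deltaS k H A ρ lco := rfl

lemma Emap_tmul (W : Type) [AddCommGroup W] [Module k W] (ν : A →ₗ[k] W →ₗ[k] W)
    (c : A) (u v : H) (φ : H →ₗ[k] W) (x : H) :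
    Emap k H A W ν (c ⊗ₜ (u ⊗ₜ v)) φ x = ν c (φ (u * (x * v))) := rfl

def Jop : A ⊗[k] (H ⊗[k] H) ≃ₗ[k] A ⊗[k] (Hᵐᵒᵖ ⊗[k] H) :=
  TensorProduct.congr (LinearEquiv.refl k A)
    (TensorProduct.congr (MulOpposite.opLinearEquiv k) (LinearEquiv.refl k H))

lemma Jop_tmul (c : A) (u v : H) :
    Jop k H A (c ⊗ₜ (u ⊗ₜ v)) = c ⊗ₜ (MulOpposite.op u ⊗ₜ v) := rfl

lemma Jop_symm_tmul (c : A) (w : Hᵐᵒᵖ) (v : H) :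
    (Jop k H A).symm (c ⊗ₜ (w ⊗ₜ v)) = c ⊗ₜ (w.unop ⊗ₜ v) := rfl

lemma csmul_apply (a : A) (n : N) : csmul k A N a n = a • n := rfl

lemma Emap_mulop (s t : A ⊗[k] (H ⊗[k] H)) :
    Emap k H A N (csmul k A N) ((Jop k H A).symm ((Jop k H A) s * (Jop k H A) t)) =
      Emap k H A N (csmul k A N) s ∘ₗ Emap k H A N (csmul k A N) t := by
  have hz1 : ∀ z : A ⊗[k] (Hᵐᵒᵖ ⊗[k] H), (0 : A ⊗[k] (Hᵐᵒᵖ ⊗[k] H)) * z = 0 :=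
    fun z => zero_mul z
  have hz2 : ∀ z : A ⊗[k] (Hᵐᵒᵖ ⊗[k] H), z * (0 : A ⊗[k] (Hᵐᵒᵖ ⊗[k] H)) = 0 :=
    fun z => mul_zero z
  have hd1 : ∀ x y z : A ⊗[k] (Hᵐᵒᵖ ⊗[k] H), (x + y) * z = x * z + y * z :=
    fun x y z => Distrib.right_distrib x y z
  have hd2 : ∀ x y z : A ⊗[k] (Hᵐᵒᵖ ⊗[k] H), x * (y + z) = x * y + x * z :=
    fun x y z => Distrib.left_distrib x y z
  induction s using TensorProduct.induction_on with
  | zero => rw [map_zero, hz1, map_zero, map_zero, LinearMap.zero_comp]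
  | add s₁ s₂ h₁ h₂ =>
    rw [map_add, hd1, map_add, map_add, h₁, h₂, map_add, LinearMap.add_comp]
  | tmul c p =>
    induction p using TensorProduct.induction_on with
    | zero =>
      rw [TensorProduct.tmul_zero, map_zero, hz1, map_zero, map_zero, LinearMap.zero_comp]
    | add p₁ p₂ h₁ h₂ =>
      rw [TensorProduct.tmul_add, map_add, hd1, map_add, map_add, h₁, h₂, map_add,
        LinearMap.add_comp]
    | tmul u v =>
      induction t using TensorProduct.induction_on with
      | zero => rw [map_zero, hz2, map_zero, map_zero, LinearMap.comp_zero]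
      | add t₁ t₂ h₁ h₂ =>
        rw [map_add, hd2, map_add, map_add, h₁, h₂, map_add, LinearMap.comp_add]
      | tmul c' p' =>
        induction p' using TensorProduct.induction_on with
        | zero =>
          rw [TensorProduct.tmul_zero, map_zero, hz2, map_zero, map_zero, LinearMap.comp_zero]
        | add p₁ p₂ h₁ h₂ =>
          rw [TensorProduct.tmul_add, map_add, hd2, map_add, map_add, h₁, h₂, map_add,
            LinearMap.comp_add]
        | tmul u' v' =>
          refine LinearMap.ext fun φ => LinearMap.ext fun x => ?_
          rw [Jop_tmul, Jop_tmul, Algebra.TensorProduct.tmul_mul_tmul,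
            Algebra.TensorProduct.tmul_mul_tmul]
          rw [show MulOpposite.op u * MulOpposite.op u' = MulOpposite.op (u' * u) from rfl]
          rw [Jop_symm_tmul]
          simp only [MulOpposite.unop_op, LinearMap.comp_apply, Emap_tmul, csmul_apply,
            mul_smul, map_smul]
          congr 2
          noncomm_ring

def antipodeOp : H →ₐ[k] Hᵐᵒᵖ :=
  AlgHom.ofLinearMap ((MulOpposite.opLinearEquiv k).toLinearMap ∘ₗ HopfAlgebra.antipode (R := k))
    (by
      show MulOpposite.op (HopfAlgebra.antipode (R := k) (1 : H)) = 1
      rw [antipode_one' (k := k) (H := H), MulOpposite.op_one])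
    (fun a b => by
      show MulOpposite.op (HopfAlgebra.antipode (R := k) (a * b)) =
        MulOpposite.op (HopfAlgebra.antipode (R := k) a) *
          MulOpposite.op (HopfAlgebra.antipode (R := k) b)
      rw [antipode_mul' (k := k) (H := H), MulOpposite.op_mul])

def algJQ : A ⊗[k] (H ⊗[k] H) →ₐ[k] A ⊗[k] (Hᵐᵒᵖ ⊗[k] H) :=
  Algebra.TensorProduct.map (AlgHom.id k A)
    (Algebra.TensorProduct.map (antipodeOp k H) (AlgHom.id k H))

lemma hJQ (s : A ⊗[k] (H ⊗[k] H)) :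
    Jop k H A (LinearMap.lTensor A (LinearMap.rTensor H (HopfAlgebra.antipode (R := k))) s) =
      algJQ k H A s := by
  induction s using TensorProduct.induction_on with
  | zero => rw [map_zero, map_zero, map_zero]
  | add s₁ s₂ h₁ h₂ => rw [map_add, map_add, map_add, h₁, h₂]
  | tmul c p =>
    induction p using TensorProduct.induction_on with
    | zero => rw [TensorProduct.tmul_zero, map_zero, map_zero, map_zero]
    | add p₁ p₂ h₁ h₂ =>
      rw [TensorProduct.tmul_add, map_add, map_add, map_add, h₁, h₂]
    | tmul u v => rfl

def algQ : (H ⊗[k] A) ⊗[k] H →ₐ[k] A ⊗[k] (H ⊗[k] H) :=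
  ((Algebra.TensorProduct.map (AlgHom.id k A)
      (Algebra.TensorProduct.comm k H H).toAlgHom).comp
    ((Algebra.TensorProduct.assoc k k k A H H).toAlgHom.comp
      (Algebra.TensorProduct.map (Algebra.TensorProduct.comm k H A).toAlgHom (AlgHom.id k H))))

def algP : A →ₐ[k] A ⊗[k] (H ⊗[k] H) :=
  (algQ k H A).comp ((Algebra.TensorProduct.map lco (AlgHom.id k H)).comp ρ)

lemma algQ_eq (t : (H ⊗[k] A) ⊗[k] H) :
    algQ k H A t =
      (LinearMap.lTensor A (TensorProduct.comm k H H).toLinearMap)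
        ((TensorProduct.assoc k A H H)
          ((LinearMap.rTensor H (TensorProduct.comm k H A).toLinearMap) t)) := by
  induction t using TensorProduct.induction_on with
  | zero => rw [map_zero, map_zero, map_zero, map_zero]
  | add t₁ t₂ h₁ h₂ => rw [map_add, map_add, map_add, map_add, h₁, h₂]
  | tmul p h =>
    induction p using TensorProduct.induction_on with
    | zero => rw [TensorProduct.zero_tmul, map_zero, map_zero, map_zero, map_zero]
    | add p₁ p₂ h₁ h₂ =>
      rw [TensorProduct.add_tmul, map_add, map_add, map_add, map_add, h₁, h₂]
    | tmul x c => rfl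

lemma deltaS_eq (a : A) :
    deltaS k H A ρ lco a =
      LinearMap.lTensor A (LinearMap.rTensor H (HopfAlgebra.antipode (R := k)))
        (algP k H A ρ lco a) := rfl

lemma JdeltaS_mul (a b : A) :
    Jop k H A (deltaS k H A ρ lco (a * b)) =
      Jop k H A (deltaS k H A ρ lco a) * Jop k H A (deltaS k H A ρ lco b) := by
  rw [deltaS_eq, deltaS_eq, deltaS_eq, hJQ, hJQ, hJQ, map_mul, map_mul]

lemma deltaS_one :
    deltaS k H A ρ lco (1 : A) = (1 : A) ⊗ₜ[k] ((1 : H) ⊗ₜ[k] (1 : H)) := by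
  rw [deltaS_eq, map_one]
  rw [show (1 : A ⊗[k] (H ⊗[k] H)) = (1 : A) ⊗ₜ[k] ((1 : H) ⊗ₜ[k] (1 : H)) from rfl]
  rw [LinearMap.lTensor_tmul, LinearMap.rTensor_tmul, antipode_one' (k := k) (H := H)]

def theta : A ⊗[k] (H ⊗[k] H) →ₗ[k] A :=
  (TensorProduct.rid k A).toLinearMap ∘ₗ
    LinearMap.lTensor A (LinearMap.mul' k k ∘ₗ
      TensorProduct.map (Coalgebra.counit (R := k)) (Coalgebra.counit (R := k)))

lemma theta_tmul (c : A) (u v : H) :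
    theta k H A (c ⊗ₜ (u ⊗ₜ v)) =
      (Coalgebra.counit (R := k) u * Coalgebra.counit (R := k) v) • c := by
  simp [theta]

lemma theta_antipode (s : A ⊗[k] (H ⊗[k] H)) :
    theta k H A (LinearMap.lTensor A (LinearMap.rTensor H (HopfAlgebra.antipode (R := k))) s) =
      theta k H A s := by
  induction s using TensorProduct.induction_on with
  | zero => rw [map_zero, map_zero]
  | add s₁ s₂ h₁ h₂ => rw [map_add, map_add, h₁, h₂, map_add]
  | tmul c p =>
    induction p using TensorProduct.induction_on with
    | zero => rw [TensorProduct.tmul_zero, map_zero, map_zero]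
    | add p₁ p₂ h₁ h₂ =>
      rw [TensorProduct.tmul_add, map_add, map_add, h₁, h₂, ← map_add, ← TensorProduct.tmul_add]
    | tmul u v =>
      rw [LinearMap.lTensor_tmul, LinearMap.rTensor_tmul, theta_tmul, theta_tmul,
        counit_antipode' (k := k) (H := H)]

lemma theta_algQ (s : H ⊗[k] A) (h : H) :
    theta k H A (algQ k H A (s ⊗ₜ h)) =
      Coalgebra.counit (R := k) h •
        (TensorProduct.lid k A) ((Coalgebra.counit (R := k)).rTensor A s) := by
  induction s using TensorProduct.induction_on with
  | zero => simp
  | add s₁ s₂ h₁ h₂ =>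
    rw [TensorProduct.add_tmul, map_add, map_add, h₁, h₂, map_add, map_add, smul_add]
  | tmul x c =>
    have : algQ k H A ((x ⊗ₜ[k] c) ⊗ₜ[k] h) = c ⊗ₜ (h ⊗ₜ x) := rfl
    rw [this, theta_tmul, LinearMap.rTensor_tmul, TensorProduct.lid_tmul, smul_smul]

lemma theta_algP
    (hρ_counit : (TensorProduct.rid k A).toLinearMap ∘ₗ
        (LinearMap.lTensor A Coalgebra.counit) ∘ₗ ρ.toLinearMap = LinearMap.id)
    (hlco_counit : (TensorProduct.lid k A).toLinearMap ∘ₗ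
        (LinearMap.rTensor A Coalgebra.counit) ∘ₗ lco.toLinearMap = LinearMap.id)
    (a : A) : theta k H A (algP k H A ρ lco a) = a := by
  have h1 : ∀ t : A ⊗[k] H,
      theta k H A ((algQ k H A) ((Algebra.TensorProduct.map lco (AlgHom.id k H)) t)) =
        (TensorProduct.rid k A) ((Coalgebra.counit (R := k)).lTensor A t) := by
    intro t
    induction t using TensorProduct.induction_on with
    | zero => simp
    | add t₁ t₂ h₁ h₂ => rw [map_add, map_add, map_add, h₁, h₂, map_add, map_add]
    | tmul c h =>
      have : (Algebra.TensorProduct.map lco (AlgHom.id k H)) (c ⊗ₜ[k] h) = lco c ⊗ₜ h := rfl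
      rw [this, theta_algQ]
      have h2 := LinearMap.congr_fun hlco_counit c
      simp only [LinearMap.comp_apply, LinearMap.id_apply, LinearEquiv.coe_coe,
        AlgHom.toLinearMap_apply] at h2
      rw [h2, LinearMap.lTensor_tmul, TensorProduct.rid_tmul]
  have h3 : theta k H A (algP k H A ρ lco a) =
      (TensorProduct.rid k A) ((Coalgebra.counit (R := k)).lTensor A (ρ a)) := h1 (ρ a)
  rw [h3]
  have h4 := LinearMap.congr_fun hρ_counit a
  simp only [LinearMap.comp_apply, LinearMap.id_apply, LinearEquiv.coe_coe,
    AlgHom.toLinearMap_apply] at h4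
  exact h4

lemma Emap_counit (s : A ⊗[k] (H ⊗[k] H)) (n : N) :
    Emap k H A N (csmul k A N) s ((Coalgebra.counit (R := k) (A := H)).smulRight n) =
      (Coalgebra.counit (R := k) (A := H)).smulRight (theta k H A s • n) := by
  induction s using TensorProduct.induction_on with
  | zero =>
    rw [map_zero, map_zero, LinearMap.zero_apply, zero_smul]
    ext x; simp
  | add s₁ s₂ h₁ h₂ =>
    rw [map_add, LinearMap.add_apply, h₁, h₂, map_add, add_smul]
    ext x; simp [smul_add]
  | tmul c p =>
    induction p using TensorProduct.induction_on with
    | zero =>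
      rw [TensorProduct.tmul_zero, map_zero, map_zero, LinearMap.zero_apply, zero_smul]
      ext x; simp
    | add p₁ p₂ h₁ h₂ =>
      rw [TensorProduct.tmul_add, map_add, LinearMap.add_apply, h₁, h₂, map_add, add_smul]
      ext x; simp [smul_add]
    | tmul u v =>
      ext x
      rw [theta_tmul]
      have l1 : Emap k H A N (csmul k A N) (c ⊗ₜ (u ⊗ₜ v))
          ((Coalgebra.counit (R := k) (A := H)).smulRight n) x =
          c • ((Coalgebra.counit (R := k) (u * (x * v))) • n) := rfl
      rw [l1, LinearMap.smulRight_apply]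
      rw [Bialgebra.counit_mul, Bialgebra.counit_mul]
      rw [smul_assoc]
      rw [← smul_comm (Coalgebra.counit (R := k) u * (Coalgebra.counit (R := k) x *
        Coalgebra.counit (R := k) v)) c n]
      have hsc : Coalgebra.counit (R := k) u * (Coalgebra.counit (R := k) x *
          Coalgebra.counit (R := k) v) = Coalgebra.counit (R := k) x *
          (Coalgebra.counit (R := k) u * Coalgebra.counit (R := k) v) := by ring
      rw [hsc, mul_smul]
theorem stmt5
    (hρ_coassoc : (LinearMap.rTensor H ρ.toLinearMap) ∘ₗ ρ.toLinearMap =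
      (TensorProduct.assoc k A H H).symm.toLinearMap ∘ₗ
        (LinearMap.lTensor A Coalgebra.comul) ∘ₗ ρ.toLinearMap)
    (hρ_counit : (TensorProduct.rid k A).toLinearMap ∘ₗ
        (LinearMap.lTensor A Coalgebra.counit) ∘ₗ ρ.toLinearMap = LinearMap.id)
    (hlco_coassoc : (LinearMap.lTensor H lco.toLinearMap) ∘ₗ lco.toLinearMap =
      (TensorProduct.assoc k H H A).toLinearMap ∘ₗ
        (LinearMap.rTensor A Coalgebra.comul) ∘ₗ lco.toLinearMap)
    (hlco_counit : (TensorProduct.lid k A).toLinearMap ∘ₗ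
        (LinearMap.rTensor A Coalgebra.counit) ∘ₗ lco.toLinearMap = LinearMap.id)
    (hcommute : (TensorProduct.assoc k H A H).toLinearMap ∘ₗ
        (LinearMap.rTensor H lco.toLinearMap) ∘ₗ ρ.toLinearMap =
      (LinearMap.lTensor H ρ.toLinearMap) ∘ₗ lco.toLinearMap) :
    -- (i) the formula defines a left `A`-module structure on `Hom_k(H, N)`
    ((∀ a b : A, liftAct k H A ρ lco N (csmul k A N) (a * b) =
        liftAct k H A ρ lco N (csmul k A N) a ∘ₗ liftAct k H A ρ lco N (csmul k A N) b)
      ∧ liftAct k H A ρ lco N (csmul k A N) 1 = LinearMap.id)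
    -- (ii) `u(n)(h) = ε(h) • n` is `A`-linear
    ∧ (∀ (a : A) (n : N),
        liftAct k H A ρ lco N (csmul k A N) a
            ((Coalgebra.counit (R := k) (A := H)).smulRight n) =
          (Coalgebra.counit (R := k) (A := H)).smulRight (a • n)) := by
  refine ⟨⟨fun a b => ?_, ?_⟩, fun a n => ?_⟩
  · have h := Emap_mulop k H A N (deltaS k H A ρ lco a) (deltaS k H A ρ lco b)
    rw [← JdeltaS_mul k H A ρ lco a b, LinearEquiv.symm_apply_apply] at h
    simp only [liftAct_eq k H A ρ lco N (csmul k A N), LinearMap.comp_apply]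
    exact h
  · simp only [liftAct_eq k H A ρ lco N (csmul k A N), LinearMap.comp_apply,
      deltaS_one k H A ρ lco]
    refine LinearMap.ext fun φ => LinearMap.ext fun x => ?_
    show (1 : A) • (φ (1 * (x * 1))) = φ x
    rw [one_mul, mul_one, one_smul]
  · simp only [liftAct_eq k H A ρ lco N (csmul k A N), LinearMap.comp_apply]
    rw [Emap_counit k H A N (deltaS k H A ρ lco a) n]
    congr 1
    rw [deltaS_eq k H A ρ lco a, theta_antipode k H A,
      theta_algP k H A ρ lco hρ_counit hlco_counit a]


end
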